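/- Let n ≥ 1, let Ω ⊆ ℂⁿ be open and let x ∈ Ω. Assume that every sequence (f_k) of holomorphic maps from the open unit disc Δ to Ω with f_k(0) = x admits a subsequence converging uniformly on compact subsets of Δ (to some continuous map Δ → ℂⁿ). Then for every open set V with x ∈ V ⊆ Ω there is a constant c = c(x,V) > 0 such that c·k_V(x,v) ≤ k_Ω(x,v) ≤ k_V(x,v) for every v ∈ ℂⁿ. -/

import Mathlib

open Complex Real Filter Metric Topology

/-- The infinitesimal Kobayashi pseudometric of an open set `W ⊆ ℂⁿ`:
`k_W(x,v) = inf { 1/R : ∃ f : Δ → W holomorphic, f 0 = x, f′(0) = R·v }`, with the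
convention `inf ∅ = +∞`. -/
noncomputable def kobMetric (n : ℕ) (W : Set (Fin n → ℂ)) (x v : Fin n → ℂ) : ENNReal :=
  sInf {c : ENNReal | ∃ R : ℝ, 0 < R ∧ c = ENNReal.ofReal (1 / R) ∧
    ∃ f : ℂ → (Fin n → ℂ), DifferentiableOn ℂ f (ball (0:ℂ) 1) ∧
      Set.MapsTo f (ball (0:ℂ) 1) W ∧ f 0 = x ∧ deriv f 0 = R • v}

/-- Paper's Fact 2.10 (`kobcalc1`), for domains in `ℂⁿ`: if every sequence of
holomorphic discs in `Ω` centred at `x` has a locally uniformly convergent subsequence,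
then the Kobayashi metric of `Ω` at `x` is comparable to that of any open neighbourhood
`V ⊆ Ω` of `x`. -/
theorem stmt_12 (n : ℕ) (hn : 1 ≤ n) (Ω : Set (Fin n → ℂ)) (hΩ : IsOpen Ω)
    (x : Fin n → ℂ) (hx : x ∈ Ω)
    (hnorm : ∀ f : ℕ → ℂ → (Fin n → ℂ),
      (∀ k, DifferentiableOn ℂ (f k) (ball (0:ℂ) 1)) →
      (∀ k, Set.MapsTo (f k) (ball (0:ℂ) 1) Ω) →
      (∀ k, f k 0 = x) →
      ∃ nk : ℕ → ℕ, StrictMono nk ∧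
        ∃ g : ℂ → (Fin n → ℂ), ContinuousOn g (ball (0:ℂ) 1) ∧
          TendstoLocallyUniformlyOn (fun k => f (nk k)) g atTop (ball (0:ℂ) 1)) :
    ∀ V : Set (Fin n → ℂ), IsOpen V → x ∈ V → V ⊆ Ω →
      ∃ c : ℝ, 0 < c ∧ ∀ v : Fin n → ℂ,
        ENNReal.ofReal c * kobMetric n V x v ≤ kobMetric n Ω x v ∧
          kobMetric n Ω x v ≤ kobMetric n V x v := by
  intro V hV hxV hVΩ
  obtain ⟨r, hr, hrV⟩ := Metric.isOpen_iff.1 hV x hxV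
  -- Equicontinuity at 0 of the family of holomorphic discs centred at x
  have key : ∃ δ : ℝ, 0 < δ ∧ δ < 1 ∧ ∀ f : ℂ → (Fin n → ℂ),
      DifferentiableOn ℂ f (ball (0:ℂ) 1) → Set.MapsTo f (ball (0:ℂ) 1) Ω →
      f 0 = x → ∀ z : ℂ, ‖z‖ < δ → f z ∈ ball x r := by
    by_contra hcon
    push_neg at hcon
    have hsel : ∀ k : ℕ, ∃ f : ℂ → (Fin n → ℂ),
        DifferentiableOn ℂ f (ball (0:ℂ) 1) ∧ Set.MapsTo f (ball (0:ℂ) 1) Ω ∧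
        f 0 = x ∧ ∃ z : ℂ, ‖z‖ < 1/(k+2) ∧ f z ∉ ball x r := by
      intro k
      have hk2 : (0:ℝ) < (k:ℝ) + 2 := by positivity
      obtain ⟨f, h1, h2, h3, z, hz1, hz2⟩ := hcon (1/((k:ℝ)+2)) (by positivity)
        (by rw [div_lt_one hk2]; linarith [Nat.cast_nonneg (α := ℝ) k])
      exact ⟨f, h1, h2, h3, z, hz1, hz2⟩
    choose F h1 h2 h3 z hz1 hz2 using hsel
    obtain ⟨nk, hnk, g, hg, hconv⟩ := hnorm F h1 h2 h3
    have h0mem : (0:ℂ) ∈ ball (0:ℂ) 1 := mem_ball_self one_pos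
    have hg0 : g 0 = x := by
      have t1 := hconv.tendsto_at h0mem
      have t2 : Tendsto (fun k => F (nk k) 0) atTop (𝓝 x) := by
        simp only [h3]; exact tendsto_const_nhds
      exact tendsto_nhds_unique t1 t2
    -- z (nk k) → 0
    have hz0 : Tendsto (fun k => z (nk k)) atTop (𝓝 0) := by
      rw [tendsto_zero_iff_norm_tendsto_zero]
      apply squeeze_zero (fun k => norm_nonneg _) (fun k => (hz1 (nk k)).le)
      have htend : Tendsto (fun k : ℕ => 1/((k:ℝ)+2)) atTop (𝓝 0) := by
        simpa [one_div, Function.comp_def] using tendsto_inv_atTop_zero.comp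
          (tendsto_atTop_add_const_right atTop (2:ℝ) tendsto_natCast_atTop_atTop)
      apply squeeze_zero (fun k => by positivity) _ htend
      intro k
      have hk2 : (0:ℝ) < (k:ℝ) + 2 := by positivity
      apply one_div_le_one_div_of_le hk2
      have hkk : (k:ℝ) ≤ (nk k : ℝ) := by exact_mod_cast hnk.le_apply
      linarith
    have hzball : ∀ k, z (nk k) ∈ ball (0:ℂ) 1 := by
      intro k
      have hk2 : (0:ℝ) < ((nk k : ℝ)) + 2 := by positivity
      have : (1:ℝ)/((nk k : ℝ)+2) ≤ 1 := by
        rw [div_le_one hk2]; linarith [Nat.cast_nonneg (α := ℝ) (nk k)]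
      simpa [mem_ball, dist_eq_norm] using lt_of_lt_of_le (hz1 (nk k)) this
    have hz0' : Tendsto (fun k => z (nk k)) atTop (𝓝[ball (0:ℂ) 1] 0) :=
      tendsto_nhdsWithin_of_tendsto_nhds_of_eventually_within _ hz0
        (Eventually.of_forall hzball)
    have hlim : Tendsto (fun k => F (nk k) (z (nk k))) atTop (𝓝 x) := by
      have := hconv.tendsto_comp (hg.continuousWithinAt h0mem) h0mem hz0'
      rwa [hg0] at this
    have : ∀ᶠ k in atTop, F (nk k) (z (nk k)) ∈ ball x r :=
      hlim (ball_mem_nhds x hr)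
    obtain ⟨k, hk⟩ := this.exists
    exact hz2 (nk k) hk
  obtain ⟨δ, hδ0, hδ1, hδ⟩ := key
  refine ⟨δ, hδ0, fun v => ⟨?_, ?_⟩⟩
  · -- hard direction : δ * k_V ≤ k_Ω
    apply le_sInf
    rintro c ⟨R, hR, rfl, f, hf, hfΩ, hf0, hf'⟩
    -- rescale
    set h : ℂ → (Fin n → ℂ) := fun w => f ((δ : ℂ) * w) with hh
    have hδR : (0:ℝ) < δ * R := mul_pos hδ0 hR
    have hmem : ENNReal.ofReal (1/(δ*R)) ∈ {c : ENNReal | ∃ R : ℝ, 0 < R ∧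
        c = ENNReal.ofReal (1 / R) ∧ ∃ f : ℂ → (Fin n → ℂ),
        DifferentiableOn ℂ f (ball (0:ℂ) 1) ∧ Set.MapsTo f (ball (0:ℂ) 1) V ∧
        f 0 = x ∧ deriv f 0 = R • v} := by
      refine ⟨δ * R, hδR, rfl, h, ?_, ?_, ?_, ?_⟩
      · apply DifferentiableOn.comp hf (by fun_prop)
        intro w hw
        simp only [mem_ball, dist_zero_right] at hw ⊢
        calc ‖(δ:ℂ) * w‖ = δ * ‖w‖ := by
              simp [norm_mul, Complex.norm_real, Real.norm_eq_abs, abs_of_pos hδ0]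
          _ < 1 := by nlinarith [norm_nonneg w]
      · intro w hw
        simp only [mem_ball, dist_zero_right] at hw
        apply hrV
        apply hδ f hf hfΩ hf0
        calc ‖(δ:ℂ) * w‖ = δ * ‖w‖ := by
              simp [norm_mul, Complex.norm_real, Real.norm_eq_abs, abs_of_pos hδ0]
          _ < δ := by nlinarith
      · simp [hh, hf0]
      · have hfd : HasDerivAt f (R • v) 0 := by
          have := (hf.differentiableAt (isOpen_ball.mem_nhds (mem_ball_self one_pos))).hasDerivAt
          rwa [hf'] at this
        have hld : HasDerivAt (fun w : ℂ => (δ:ℂ) * w) (δ:ℂ) 0 := by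
          simpa using HasDerivAt.const_mul (δ:ℂ) (hasDerivAt_id (0:ℂ))
        have : HasDerivAt h ((δ:ℂ) • (R • v)) 0 := by
          have := HasDerivAt.scomp_of_eq (0:ℂ) hfd hld (by simp)
          simpa [hh, Function.comp_def] using this
        rw [this.deriv]
        ext i
        simp [smul_smul]
        ring
    calc ENNReal.ofReal δ * kobMetric n V x v
        ≤ ENNReal.ofReal δ * ENNReal.ofReal (1/(δ*R)) :=
          mul_le_mul_right (sInf_le hmem) _
      _ = ENNReal.ofReal (δ * (1/(δ*R))) :=
          (ENNReal.ofReal_mul hδ0.le).symm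
      _ = ENNReal.ofReal (1/R) := by
          congr 1; field_simp
  · -- easy direction : discs in V are discs in Ω
    apply sInf_le_sInf
    rintro c ⟨R, hR, rfl, f, hf, hfV, hf0, hf'⟩
    exact ⟨R, hR, rfl, f, hf, hfV.mono_right hVΩ, hf0, hf'⟩
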